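/- Let G be a Borel probability measure on ℝ × ℝ^p with finite second moments, w₀ = (y₀, x₀) ∈ ℝ × ℝ^p, and G_ε = (1 − ε)G + ε δ_{w₀} for ε ∈ [0, 1). Let S ⊆ ℝ be a Borel set with w = G(S × ℝ^p) > 0, and let μ_S ∈ ℝ^p and μ_{y,S} ∈ ℝ denote the conditional means of X and Y given {Y ∈ S} under G. Then the map ε ↦ Cov_{G_ε}(X, Y | Y ∈ S) is right-differentiable at ε = 0, with derivative 1{y₀ ∈ S} · (1/w) · [ (y₀ − μ_{y,S})(x₀ − μ_S) − Cov_G(X, Y | Y ∈ S) ]. -/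

import Mathlib

open MeasureTheory ProbabilityTheory Matrix
open scoped ENNReal

section helpers

variable {α : Type*} [MeasurableSpace α]

lemma my_integral_cond (μ : Measure α) (A : Set α) (f : α → ℝ) :
    ∫ z, f z ∂(μ[|A]) = (μ A).toReal⁻¹ * ∫ z in A, f z ∂μ := by
  rw [ProbabilityTheory.cond, integral_smul_measure, ENNReal.toReal_inv, smul_eq_mul]

lemma my_cov_formula (μ : Measure α) {A : Set α} (h0 : μ A ≠ 0) (hfin : μ A ≠ ⊤)
    (f g : α → ℝ) (hf : Integrable f (μ.restrict A)) (hg : Integrable g (μ.restrict A))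
    (hfg : Integrable (fun z => f z * g z) (μ.restrict A)) :
    ∫ z, (f z - ∫ z', f z' ∂(μ[|A])) * (g z - ∫ z', g z' ∂(μ[|A])) ∂(μ[|A]) =
      (∫ z in A, f z * g z ∂μ) / (μ A).toReal -
        ((∫ z in A, f z ∂μ) / (μ A).toReal) * ((∫ z in A, g z ∂μ) / (μ A).toReal) := by
  have hne : ((μ A)⁻¹ : ℝ≥0∞) ≠ ⊤ := by simp [h0]
  have hfc : Integrable f (μ[|A]) := by
    rw [ProbabilityTheory.cond]; exact hf.smul_measure hne
  have hgc : Integrable g (μ[|A]) := by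
    rw [ProbabilityTheory.cond]; exact hg.smul_measure hne
  have hfgc : Integrable (fun z => f z * g z) (μ[|A]) := by
    rw [ProbabilityTheory.cond]; exact hfg.smul_measure hne
  have hprob : IsProbabilityMeasure (μ[|A]) :=
    cond_isProbabilityMeasure_of_finite h0 hfin
  set mf := ∫ z', f z' ∂(μ[|A]) with hmf
  set mg := ∫ z', g z' ∂(μ[|A]) with hmg
  have expand : ∀ z, (f z - mf) * (g z - mg) =
      f z * g z - mf * g z - mg * f z + mf * mg := by intro z; ring
  rw [integral_congr_ae (Filter.Eventually.of_forall expand)]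
  have h1 : Integrable (fun a => f a * g a - mf * g a) (μ[|A]) :=
    hfgc.sub (hgc.const_mul mf)
  have h2 : Integrable (fun a => f a * g a - mf * g a - mg * f a) (μ[|A]) :=
    h1.sub (hfc.const_mul mg)
  rw [integral_add h2 (integrable_const _), integral_sub h1 (hfc.const_mul mg),
    integral_sub hfgc (hgc.const_mul mf), integral_const_mul, integral_const_mul,
    integral_const]
  simp only [measure_univ, probReal_univ, ENNReal.toReal_one, one_smul, ← hmf, ← hmg]
  rw [my_integral_cond] at hmf hmg
  rw [my_integral_cond]
  rw [hmf, hmg]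
  field_simp
  ring

end helpers

lemma my_integrable_dirac {α : Type*} [MeasurableSpace α] (w₀ : α) {f : α → ℝ}
    (hfm : Measurable f) : Integrable f (Measure.dirac w₀) := by
  refine ⟨hfm.aestronglyMeasurable, ?_⟩
  have hm : Measurable fun a => ENNReal.ofReal ‖f a‖ :=
    (hfm.norm).ennreal_ofReal
  rw [hasFiniteIntegral_iff_norm, MeasureTheory.lintegral_dirac' _ hm]
  exact ENNReal.ofReal_lt_top

lemma my_mix_setIntegral {α : Type*} [MeasurableSpace α] (μ : Measure α) (w₀ : α)
    {A : Set α} (hA : MeasurableSet A) {c e : ℝ} (hc : 0 ≤ c) (he : 0 ≤ e) {f : α → ℝ}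
    (hfm : Measurable f) (hf : Integrable f (μ.restrict A)) :
    ∫ z in A, f z ∂(ENNReal.ofReal c • μ + ENNReal.ofReal e • Measure.dirac w₀) =
      c * ∫ z in A, f z ∂μ + e * (A.indicator f w₀) := by
  classical
  rw [Measure.restrict_add, Measure.restrict_smul, Measure.restrict_smul,
    MeasureTheory.restrict_dirac' hA]
  have hd : Integrable f ((ENNReal.ofReal e) • (if w₀ ∈ A then Measure.dirac w₀ else 0)) := by
    split_ifs with hw
    · exact (my_integrable_dirac w₀ hfm).smul_measure ENNReal.ofReal_ne_top
    · simp
  rw [integral_add_measure (hf.smul_measure ENNReal.ofReal_ne_top) hd,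
    integral_smul_measure, integral_smul_measure]
  congr 1
  · rw [ENNReal.toReal_ofReal hc, smul_eq_mul]
  · rw [ENNReal.toReal_ofReal he, smul_eq_mul]
    split_ifs with hw
    · rw [integral_dirac' _ _ hfm.stronglyMeasurable, Set.indicator_of_mem hw]
    · simp [Set.indicator_of_notMem hw]

lemma my_mix_integrable {α : Type*} [MeasurableSpace α] (μ : Measure α) (w₀ : α)
    {A : Set α} (hA : MeasurableSet A) (c e : ℝ≥0∞) (hce : c ≠ ⊤) (hee : e ≠ ⊤) {f : α → ℝ}
    (hfm : Measurable f) (hf : Integrable f (μ.restrict A)) :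
    Integrable f ((c • μ + e • Measure.dirac w₀).restrict A) := by
  classical
  rw [Measure.restrict_add, Measure.restrict_smul, Measure.restrict_smul,
    MeasureTheory.restrict_dirac' hA]
  refine Integrable.add_measure (hf.smul_measure hce) ?_
  split_ifs with hw
  · exact (my_integrable_dirac w₀ hfm).smul_measure hee
  · simp

lemma my_mix_measure {α : Type*} [MeasurableSpace α] (μ : Measure α) [IsFiniteMeasure μ]
    (w₀ : α) {A : Set α} (hA : MeasurableSet A) {c e : ℝ} (hc : 0 ≤ c) (he : 0 ≤ e) :
    ((ENNReal.ofReal c • μ + ENNReal.ofReal e • Measure.dirac w₀) A).toReal =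
      c * (μ A).toReal + e * (A.indicator (fun _ => (1 : ℝ)) w₀) := by
  classical
  rw [Measure.add_apply, Measure.smul_apply, Measure.smul_apply,
    Measure.dirac_apply' _ hA, smul_eq_mul, smul_eq_mul]
  have hind : (A.indicator (1 : α → ℝ≥0∞) w₀) ≠ ⊤ := by
    by_cases hw : w₀ ∈ A <;> simp [hw]
  rw [ENNReal.toReal_add (by finiteness) (ENNReal.mul_ne_top ENNReal.ofReal_ne_top hind),
    ENNReal.toReal_mul,
    ENNReal.toReal_mul, ENNReal.toReal_ofReal hc, ENNReal.toReal_ofReal he]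
  by_cases hw : w₀ ∈ A <;>
    simp [Set.indicator_of_mem, Set.indicator_of_notMem, hw]
/-- the fixed-slice influence function of the slice covariance: under
`ε`-contamination `G_ε = (1−ε)G + ε δ_{(y₀,x₀)}`, the map
`ε ↦ Cov_{G_ε}(X, Y | Y ∈ S)` is right-differentiable at `0` with derivative
`1{y₀ ∈ S} (1/w) [(y₀ − μ_{y,S})(x₀ − μ_S) − Cov_G(X, Y | Y ∈ S)]`. -/
theorem stmt_16 {p : ℕ} (G : Measure (ℝ × (Fin p → ℝ))) [IsProbabilityMeasure G]
    (hG2y : MemLp (fun z : ℝ × (Fin p → ℝ) => z.1) 2 G)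
    (hG2x : ∀ i, MemLp (fun z : ℝ × (Fin p → ℝ) => z.2 i) 2 G)
    (y₀ : ℝ) (x₀ : Fin p → ℝ)
    (S : Set ℝ) (hS : MeasurableSet S)
    (w : ℝ) (hw : w = (G (Prod.fst ⁻¹' S)).toReal) (hwpos : 0 < w)
    (μS : Fin p → ℝ) (hμS : ∀ i, μS i = ∫ z, z.2 i ∂(G[|Prod.fst ⁻¹' S]))
    (μyS : ℝ) (hμyS : μyS = ∫ z, z.1 ∂(G[|Prod.fst ⁻¹' S]))
    (CovG : Fin p → ℝ)
    (hCovG : ∀ i, CovG i = ∫ z, (z.2 i - μS i) * (z.1 - μyS) ∂(G[|Prod.fst ⁻¹' S])) :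
    ∀ i, HasDerivWithinAt
      (fun ε : ℝ =>
        let Gε : Measure (ℝ × (Fin p → ℝ)) :=
          ENNReal.ofReal (1 - ε) • G + ENNReal.ofReal ε • Measure.dirac (y₀, x₀)
        ∫ z, (z.2 i - ∫ z', z'.2 i ∂(Gε[|Prod.fst ⁻¹' S])) *
            (z.1 - ∫ z', z'.1 ∂(Gε[|Prod.fst ⁻¹' S])) ∂(Gε[|Prod.fst ⁻¹' S]))
      (S.indicator (fun _ => (1 : ℝ)) y₀ * (1 / w) *
        ((y₀ - μyS) * (x₀ i - μS i) - CovG i))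
      (Set.Ici 0) 0 := by
  classical
  intro i
  set A : Set (ℝ × (Fin p → ℝ)) := Prod.fst ⁻¹' S with hAdef
  have hA : MeasurableSet A := hS.preimage measurable_fst
  set w₀ : ℝ × (Fin p → ℝ) := (y₀, x₀) with hw₀def
  set χ : ℝ := S.indicator (fun _ => (1 : ℝ)) y₀ with hχdef
  -- basic measurability
  have hmx : Measurable (fun z : ℝ × (Fin p → ℝ) => z.2 i) :=
    (measurable_pi_apply i).comp measurable_snd
  have hmy : Measurable (fun z : ℝ × (Fin p → ℝ) => z.1) := measurable_fst
  have hmxy : Measurable (fun z : ℝ × (Fin p → ℝ) => z.2 i * z.1) := hmx.mul hmy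
  -- integrability under G
  have intx : Integrable (fun z : ℝ × (Fin p → ℝ) => z.2 i) G :=
    (hG2x i).integrable one_le_two
  have inty : Integrable (fun z : ℝ × (Fin p → ℝ) => z.1) G :=
    hG2y.integrable one_le_two
  have intxy : Integrable (fun z : ℝ × (Fin p → ℝ) => z.2 i * z.1) G := by
    have hpqr : (1 : ℝ≥0∞) / 1 = 1 / 2 + 1 / 2 := by
      rw [ENNReal.div_add_div_same, one_div_one,
        show (1:ℝ≥0∞) + 1 = 2 from one_add_one_eq_two]
      exact (ENNReal.div_self two_ne_zero ENNReal.ofNat_ne_top).symm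
    have : MemLp _ 1 G := hG2y.smul (hG2x i)
    exact memLp_one_iff_integrable.mp this
  -- abbreviations
  set Ix : ℝ := ∫ z in A, z.2 i ∂G with hIxdef
  set Iy : ℝ := ∫ z in A, z.1 ∂G with hIydef
  set Ixy : ℝ := ∫ z in A, z.2 i * z.1 ∂G with hIxydef
  set D : ℝ → ℝ := fun ε => (1 - ε) * w + ε * χ with hDdef
  set Nx : ℝ → ℝ := fun ε => (1 - ε) * Ix + ε * (χ * x₀ i) with hNxdef
  set Ny : ℝ → ℝ := fun ε => (1 - ε) * Iy + ε * (χ * y₀) with hNydef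
  set N2 : ℝ → ℝ := fun ε => (1 - ε) * Ixy + ε * (χ * (x₀ i * y₀)) with hN2def
  set φ : ℝ → ℝ := fun ε => (N2 ε * D ε - Nx ε * Ny ε) / (D ε) ^ 2 with hφdef
  -- indicator facts
  have hχA : A.indicator (fun _ => (1 : ℝ)) w₀ = χ := by
    by_cases hy : y₀ ∈ S <;>
      simp [hχdef, hAdef, hw₀def, Set.indicator, hy]
  have hχfx : A.indicator (fun z : ℝ × (Fin p → ℝ) => z.2 i) w₀ = χ * x₀ i := by
    by_cases hy : y₀ ∈ S <;>
      simp [hχdef, hAdef, hw₀def, Set.indicator, hy]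
  have hχfy : A.indicator (fun z : ℝ × (Fin p → ℝ) => z.1) w₀ = χ * y₀ := by
    by_cases hy : y₀ ∈ S <;>
      simp [hχdef, hAdef, hw₀def, Set.indicator, hy]
  have hχfxy : A.indicator (fun z : ℝ × (Fin p → ℝ) => z.2 i * z.1) w₀
      = χ * (x₀ i * y₀) := by
    by_cases hy : y₀ ∈ S <;>
      simp [hχdef, hAdef, hw₀def, Set.indicator, hy]
  have hχnn : 0 ≤ χ := by
    by_cases hy : y₀ ∈ S <;> simp [hχdef, Set.indicator, hy]
  have hwne : w ≠ 0 := ne_of_gt hwpos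
  -- facts about G on A
  have hGA0 : G A ≠ 0 := by
    intro h
    rw [hw, h] at hwpos
    simp at hwpos
  have hGAfin : G A ≠ ⊤ := measure_ne_top G A
  have hGAval : (G A).toReal = w := by rw [hw]
  -- the base-measure conditional means
  have hμSx : μS i = Ix / w := by
    rw [hμS i, my_integral_cond G A, hGAval, ← hIxdef, inv_mul_eq_div]
  have hμSy : μyS = Iy / w := by
    rw [hμyS, my_integral_cond G A, hGAval, ← hIydef, inv_mul_eq_div]
  have hCovval : CovG i = Ixy / w - (Ix / w) * (Iy / w) := by
    have h := hCovG i
    rw [hμS i, hμyS] at h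
    rw [h, my_cov_formula G hGA0 hGAfin _ _ (intx.restrict) (inty.restrict)
      (intxy.restrict), hGAval, ← hIxydef, ← hIxdef, ← hIydef]
  -- key: the function agrees with φ on [0, 1)
  have key : ∀ ε : ℝ, 0 ≤ ε → ε < 1 →
      (∫ z, (z.2 i - ∫ z', z'.2 i
            ∂((ENNReal.ofReal (1 - ε) • G + ENNReal.ofReal ε • Measure.dirac w₀)[|A])) *
          (z.1 - ∫ z', z'.1
            ∂((ENNReal.ofReal (1 - ε) • G + ENNReal.ofReal ε • Measure.dirac w₀)[|A]))
        ∂((ENNReal.ofReal (1 - ε) • G + ENNReal.ofReal ε • Measure.dirac w₀)[|A])) = φ ε := by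
    intro ε hε0 hε1
    set Gε : Measure (ℝ × (Fin p → ℝ)) :=
      ENNReal.ofReal (1 - ε) • G + ENNReal.ofReal ε • Measure.dirac w₀ with hGεdef
    have h1ε : (0:ℝ) ≤ 1 - ε := by linarith
    have hDval : (Gε A).toReal = D ε := by
      rw [hGεdef, my_mix_measure G w₀ hA h1ε hε0, hχA, hGAval]
    have hDpos : 0 < D ε :=
      add_pos_of_pos_of_nonneg (mul_pos (by linarith) hwpos) (mul_nonneg hε0 hχnn)
    have hGε0 : Gε A ≠ 0 := by
      intro h; rw [h] at hDval; simp at hDval; linarith [hDpos, hDval]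
    have hGεfin : Gε A ≠ ⊤ := by
      intro h; rw [h] at hDval; simp at hDval; linarith [hDpos, hDval]
    have hfxr : Integrable (fun z : ℝ × (Fin p → ℝ) => z.2 i) (Gε.restrict A) :=
      my_mix_integrable G w₀ hA _ _ ENNReal.ofReal_ne_top ENNReal.ofReal_ne_top hmx
        (intx.restrict)
    have hfyr : Integrable (fun z : ℝ × (Fin p → ℝ) => z.1) (Gε.restrict A) :=
      my_mix_integrable G w₀ hA _ _ ENNReal.ofReal_ne_top ENNReal.ofReal_ne_top hmy
        (inty.restrict)
    have hfxyr : Integrable (fun z : ℝ × (Fin p → ℝ) => z.2 i * z.1) (Gε.restrict A) :=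
      my_mix_integrable G w₀ hA _ _ ENNReal.ofReal_ne_top ENNReal.ofReal_ne_top hmxy
        (intxy.restrict)
    have hIxval : (∫ z in A, z.2 i ∂Gε) = Nx ε := by
      rw [hGεdef, my_mix_setIntegral G w₀ hA h1ε hε0 hmx (intx.restrict), hχfx]
    have hIyval : (∫ z in A, z.1 ∂Gε) = Ny ε := by
      rw [hGεdef, my_mix_setIntegral G w₀ hA h1ε hε0 hmy (inty.restrict), hχfy]
    have hIxyval : (∫ z in A, z.2 i * z.1 ∂Gε) = N2 ε := by
      rw [hGεdef, my_mix_setIntegral G w₀ hA h1ε hε0 hmxy (intxy.restrict), hχfxy]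
    rw [my_cov_formula Gε hGε0 hGεfin _ _ hfxr hfyr hfxyr, hDval, hIxval, hIyval, hIxyval,
      hφdef]
    field_simp
  -- derivative of φ
  have affine : ∀ a b : ℝ, HasDerivAt (fun ε : ℝ => (1 - ε) * a + ε * b) (b - a) 0 := by
    intro a b
    have h := (((hasDerivAt_id (0:ℝ)).const_sub 1).mul_const a).add
      ((hasDerivAt_id (0:ℝ)).mul_const b)
    exact h.congr_deriv (by ring)
  have hD' : HasDerivAt D (χ - w) 0 := affine w χ
  have hNx' : HasDerivAt Nx (χ * x₀ i - Ix) 0 := affine Ix (χ * x₀ i)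
  have hNy' : HasDerivAt Ny (χ * y₀ - Iy) 0 := affine Iy (χ * y₀)
  have hN2' : HasDerivAt N2 (χ * (x₀ i * y₀) - Ixy) 0 := affine Ixy (χ * (x₀ i * y₀))
  have hU : HasDerivAt (fun ε => N2 ε * D ε - Nx ε * Ny ε)
      (((χ * (x₀ i * y₀) - Ixy) * D 0 + N2 0 * (χ - w)) -
        ((χ * x₀ i - Ix) * Ny 0 + Nx 0 * (χ * y₀ - Iy))) 0 :=
    (hN2'.mul hD').sub (hNx'.mul hNy')
  have hD2 : HasDerivAt (fun ε => (D ε) ^ 2) (2 * D 0 ^ 1 * (χ - w)) 0 := hD'.pow 2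
  have hD0 : D 0 = w := by simp [hDdef]
  have hN20 : N2 0 = Ixy := by simp [hN2def]
  have hNx0 : Nx 0 = Ix := by simp [hNxdef]
  have hNy0 : Ny 0 = Iy := by simp [hNydef]
  have hD2ne : (D 0) ^ 2 ≠ 0 := by rw [hD0]; positivity
  have hφ' : HasDerivAt φ
      (((((χ * (x₀ i * y₀) - Ixy) * D 0 + N2 0 * (χ - w)) -
        ((χ * x₀ i - Ix) * Ny 0 + Nx 0 * (χ * y₀ - Iy))) * (D 0) ^ 2 -
        (N2 0 * D 0 - Nx 0 * Ny 0) * (2 * D 0 ^ 1 * (χ - w))) / ((D 0) ^ 2) ^ 2) 0 :=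
    hU.div hD2 hD2ne
  -- match the derivative value
  have hval : χ * (1 / w) * ((y₀ - μyS) * (x₀ i - μS i) - CovG i) =
      ((((χ * (x₀ i * y₀) - Ixy) * D 0 + N2 0 * (χ - w)) -
        ((χ * x₀ i - Ix) * Ny 0 + Nx 0 * (χ * y₀ - Iy))) * (D 0) ^ 2 -
        (N2 0 * D 0 - Nx 0 * Ny 0) * (2 * D 0 ^ 1 * (χ - w))) / ((D 0) ^ 2) ^ 2 := by
    rw [hD0, hN20, hNx0, hNy0, hμSx, hμSy, hCovval]
    have hχcases : χ = 0 ∨ χ = 1 := by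
      by_cases hy : y₀ ∈ S <;> simp [hχdef, Set.indicator, hy]
    rcases hχcases with h | h <;> rw [h] <;> field_simp <;> ring
  have hφw : HasDerivWithinAt φ
      (χ * (1 / w) * ((y₀ - μyS) * (x₀ i - μS i) - CovG i)) (Set.Ici 0) 0 := by
    rw [hval]; exact hφ'.hasDerivWithinAt
  refine hφw.congr_of_eventuallyEq ?_ ?_
  · have hmem : Set.Ici (0:ℝ) ∩ Set.Iio 1 ∈ nhdsWithin (0:ℝ) (Set.Ici 0) :=
      Filter.inter_mem self_mem_nhdsWithin
        (nhdsWithin_le_nhds (Iio_mem_nhds one_pos))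
    exact Filter.eventuallyEq_of_mem hmem fun ε hε => key ε hε.1 hε.2
  · exact key 0 le_rfl one_pos
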